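/- Let d ≥ 1, let {B(x_i, r_i)}_{i=1}^∞ be a finite or countably infinite collection of closed Euclidean balls in ℝ^d, and let 0 < δ ≤ 1. Then L^d(∪_i B(x_i, δ r_i)) ≥ (δ/3)^d · L^d(∪_i B(x_i, r_i)), where L^d denotes d-dimensional Lebesgue measure. -/

import Mathlib

open MeasureTheory Metric Set ENNReal

/-- **Lemma (general d).** For `d ≥ 1`, a finite or countably infinite collection of closed
Euclidean balls `B(x i, r i)` in `ℝ^d` and `0 < δ ≤ 1`, we have
`L^d(⋃ i, B(x i, δ r i)) ≥ (δ/3)^d · L^d(⋃ i, B(x i, r i))`. -/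
theorem measure_iUnion_shrunk_balls (d : ℕ) (hd : 1 ≤ d) (ι : Type*) [Countable ι]
    (x : ι → EuclideanSpace ℝ (Fin d)) (r : ι → ℝ) (hr : ∀ i, 0 < r i)
    (δ : ℝ) (hδ0 : 0 < δ) (hδ1 : δ ≤ 1) :
    ENNReal.ofReal ((δ / 3) ^ d) * volume (⋃ i, closedBall (x i) (r i)) ≤
      volume (⋃ i, closedBall (x i) (δ * r i)) := by
  set c : ℝ≥0∞ := volume (closedBall (0 : EuclideanSpace ℝ (Fin d)) 1) with hc
  have hball : ∀ (y : EuclideanSpace ℝ (Fin d)) (s : ℝ), 0 ≤ s →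
      volume (closedBall y s) = ENNReal.ofReal (s ^ d) * c := by
    intro y s hs
    rw [hc, Measure.addHaar_closedBall' volume y hs, finrank_euclideanSpace_fin]
  set U := ⋃ i, closedBall (x i) (r i)
  set V := ⋃ i, closedBall (x i) (δ * r i) with hV
  by_cases hbdd : ∃ R : ℝ, ∀ i, r i ≤ R
  · obtain ⟨R, hR⟩ := hbdd
    have key : ∀ τ : ℝ, 3 < τ →
        volume U ≤ ENNReal.ofReal ((τ / δ) ^ d) * volume V := by
      intro τ hτ
      obtain ⟨u, -, hdisj, hcov⟩ :=
        Vitali.exists_disjoint_subfamily_covering_enlargement_closedBall (univ : Set ι) x r R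
          (fun a _ => hR a) τ hτ
      have hdisj' : u.PairwiseDisjoint fun j => closedBall (x j) (δ * r j) := by
        refine hdisj.mono fun j => closedBall_subset_closedBall ?_
        exact mul_le_of_le_one_left (hr j).le hδ1
      calc volume U
          ≤ volume (⋃ j ∈ u, closedBall (x j) (τ * r j)) := by
            refine measure_mono (iUnion_subset fun i => ?_)
            obtain ⟨b, hb, hsub⟩ := hcov i (mem_univ i)
            exact hsub.trans (subset_biUnion_of_mem (u := fun j => closedBall (x j) (τ * r j)) hb)
        _ ≤ ∑' j : u, volume (closedBall (x j.1) (τ * r j.1)) :=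
            measure_biUnion_le volume u.to_countable _
        _ = ∑' j : u, ENNReal.ofReal ((τ / δ) ^ d) * volume (closedBall (x j.1) (δ * r j.1)) := by
            refine tsum_congr fun j => ?_
            rw [hball _ _ (mul_nonneg (by linarith) (hr j.1).le),
              hball _ _ (mul_nonneg hδ0.le (hr j.1).le), ← mul_assoc,
              ← ENNReal.ofReal_mul (by positivity), ← mul_pow]
            have h5 : τ / δ * (δ * r j.1) = τ * r j.1 := by
              field_simp
            rw [h5]
        _ = ENNReal.ofReal ((τ / δ) ^ d) * ∑' j : u, volume (closedBall (x j.1) (δ * r j.1)) :=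
            ENNReal.tsum_mul_left
        _ = ENNReal.ofReal ((τ / δ) ^ d) * volume (⋃ j ∈ u, closedBall (x j) (δ * r j)) := by
            rw [measure_biUnion u.to_countable hdisj' fun j _ => measurableSet_closedBall]
        _ ≤ ENNReal.ofReal ((τ / δ) ^ d) * volume V := by
            gcongr
            exact iUnion₂_subset fun j _ => subset_iUnion (fun i => closedBall (x i) (δ * r i)) j
    have h3 : volume U ≤ ENNReal.ofReal ((3 / δ) ^ d) * volume V := by
      have htend : Filter.Tendsto
          (fun n : ℕ => ENNReal.ofReal (((3 + 1 / (n + 1)) / δ) ^ d) * volume V)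
          Filter.atTop (nhds (ENNReal.ofReal ((3 / δ) ^ d) * volume V)) := by
        have h1 : Filter.Tendsto (fun n : ℕ => (3 + 1 / (n + 1) : ℝ)) Filter.atTop (nhds 3) := by
          have := tendsto_one_div_add_atTop_nhds_zero_nat (𝕜 := ℝ)
          simpa using (tendsto_const_nhds (x := (3:ℝ))).add this
        have h2 : Filter.Tendsto (fun n : ℕ => ENNReal.ofReal (((3 + 1 / (n + 1)) / δ) ^ d))
            Filter.atTop (nhds (ENNReal.ofReal ((3 / δ) ^ d))) := by
          exact (ENNReal.continuous_ofReal.tendsto _).comp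
            (((h1.div_const δ).pow d))
        exact ENNReal.Tendsto.mul_const h2
          (Or.inl (by positivity))
      refine ge_of_tendsto' htend fun n => key _ ?_
      have : (0:ℝ) < 1 / (n + 1) := by positivity
      linarith
    calc ENNReal.ofReal ((δ / 3) ^ d) * volume U
        ≤ ENNReal.ofReal ((δ / 3) ^ d) * (ENNReal.ofReal ((3 / δ) ^ d) * volume V) := by gcongr
      _ = volume V := by
          rw [← mul_assoc, ← ENNReal.ofReal_mul (by positivity), ← mul_pow]
          have : δ / 3 * (3 / δ) = 1 := by field_simp
          simp [this]
  · -- unbounded radii: the shrunk union has infinite volume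
    push_neg at hbdd
    have hVtop : volume V = ⊤ := by
      by_contra hne
      have hc0 : c ≠ 0 := (measure_closedBall_pos volume _ one_pos).ne'
      have hcfin : c ≠ ⊤ := measure_closedBall_lt_top.ne
      set K := (volume V / c).toReal
      have hbound : ∀ i, δ * r i ≤ max 1 K := by
        intro i
        rcases le_or_gt (δ * r i) 1 with h | h
        · exact h.trans (le_max_left _ _)
        · refine le_trans ?_ (le_max_right _ _)
          have h1 : volume (closedBall (x i) (δ * r i)) ≤ volume V :=
            measure_mono (subset_iUnion (fun i => closedBall (x i) (δ * r i)) i)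
          rw [hball _ _ (by positivity)] at h1
          have h2 : ENNReal.ofReal ((δ * r i) ^ d) ≤ volume V / c :=
            (ENNReal.le_div_iff_mul_le (Or.inl hc0) (Or.inl hcfin)).2 h1
          have h3 : (δ * r i) ^ d ≤ K := by
            have h4 := ENNReal.toReal_mono (by
              simp [ENNReal.div_eq_top, hne, hcfin, hc0]) h2
            rwa [ENNReal.toReal_ofReal (by positivity : (0:ℝ) ≤ (δ * r i) ^ d)] at h4
          calc δ * r i ≤ (δ * r i) ^ d := le_self_pow₀ h.le (by omega)
            _ ≤ K := h3
      obtain ⟨i, hi⟩ := hbdd (max 1 K / δ)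
      have := hbound i
      rw [div_lt_iff₀ hδ0] at hi
      nlinarith
    rw [hVtop]
    exact le_top
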